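/- Let H(x,y) = ∑_{i,j≥0} h_{ij} x^i y^j ∈ ℂ[[x,y]] and F(w_1,w_2,w_3) = H((w_1−w_2)/(1−w_2), w_3(1−w_2)/(1−w_3))/((1−w_2)(1−w_3)). Define the linear map Φ_F on ℂ[u,v] by Φ_F[C(S,a) u^a v^{S−a}] = ∑_{b=0}^S C(S,b) R_S(a,b) u^b v^{S−b}, where R_S(a,b) is the coefficient of w_1^a w_2^{S−a} w_3^b in F. Then Φ_F[u^n] = ∑_{j=0}^n C(n,j) h_{nj} u^j (u+v)^{n−j} for every n ≥ 0. -/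

import Mathlib

open MvPowerSeries

/-- Formal partial derivative of a power series in three variables. -/
noncomputable def pderiv3 (i : Fin 3) (F : MvPowerSeries (Fin 3) ℂ) :
    MvPowerSeries (Fin 3) ℂ :=
  fun m => ((m i : ℂ) + 1) * coeff (m + Finsupp.single i 1) F

/-- Composition `H(f,g)` of a two-variable power series `H` with two three-variable power
series `f`, `g` (intended for `f`, `g` with zero constant term, in which case the coefficient
of a monomial `m` only receives contributions from `f^i g^j` with `i + j ≤ deg m`). -/
noncomputable def comp2 (H : MvPowerSeries (Fin 2) ℂ) (f g : MvPowerSeries (Fin 3) ℂ) :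
    MvPowerSeries (Fin 3) ℂ :=
  fun m =>
    ∑ p ∈ Finset.range (m.sum (fun _ e => e) + 1) ×ˢ
        Finset.range (m.sum (fun _ e => e) + 1),
      coeff (Finsupp.single 0 p.1 + Finsupp.single 1 p.2) H *
        coeff m (f ^ p.1 * g ^ p.2)

/-- The power series `(w₁ - w₂)/(1 - w₂)`. -/
noncomputable def subx : MvPowerSeries (Fin 3) ℂ := (X 0 - X 1) * (1 - X 1)⁻¹

/-- The power series `w₃(1 - w₂)/(1 - w₃)`. -/
noncomputable def suby : MvPowerSeries (Fin 3) ℂ := X 2 * (1 - X 1) * (1 - X 2)⁻¹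

/-- `F(w₁,w₂,w₃) = H((w₁-w₂)/(1-w₂), w₃(1-w₂)/(1-w₃)) / ((1-w₂)(1-w₃))`. -/
noncomputable def FofH (H : MvPowerSeries (Fin 2) ℂ) : MvPowerSeries (Fin 3) ℂ :=
  ((1 - X 1) * (1 - X 2))⁻¹ * comp2 H subx suby

/-- The matrix entry `R_S(a,b) = [w₁^a w₂^{S-a} w₃^b] F`. -/
noncomputable def Rmat (H : MvPowerSeries (Fin 2) ℂ) (S a b : ℕ) : ℂ :=
  coeff (Finsupp.single 0 a + Finsupp.single 1 (S - a) + Finsupp.single 2 b) (FofH H)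

/-- The coefficient `h_{ij}` of `H`. -/
noncomputable def hcoeff (H : MvPowerSeries (Fin 2) ℂ) (i j : ℕ) : ℂ :=
  coeff (Finsupp.single 0 i + Finsupp.single 1 j) H

noncomputable def geom (i : Fin 3) : MvPowerSeries (Fin 3) ℂ :=
  fun m => if m = Finsupp.single i (m i) then 1 else 0

lemma coeff_geom (i : Fin 3) (m : Fin 3 →₀ ℕ) :
    coeff m (geom i) = if m = Finsupp.single i (m i) then 1 else 0 := rfl

lemma coeff_geom_single (i : Fin 3) (c : ℕ) :
    coeff (Finsupp.single i c) (geom i) = 1 := by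
  rw [coeff_geom, if_pos]
  simp

lemma eq_single_iff (i : Fin 3) (m : Fin 3 →₀ ℕ) :
    m = Finsupp.single i (m i) ↔ ∀ j, j ≠ i → m j = 0 := by
  constructor
  · intro h j hj
    conv_lhs => rw [h]
    simp [Finsupp.single_apply, (Ne.symm hj)]
  · intro h
    ext j
    rcases eq_or_ne j i with rfl | hj
    · simp
    · simp [Finsupp.single_apply, Ne.symm hj, h j hj]

lemma one_sub_X_mul_geom (i : Fin 3) : (1 - X i) * geom i = 1 := by
  ext m
  rw [sub_mul, one_mul, map_sub, MvPowerSeries.coeff_one]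
  have hX : (X i : MvPowerSeries (Fin 3) ℂ) = monomial (Finsupp.single i 1) 1 := rfl
  rw [hX, coeff_monomial_mul, coeff_geom]
  rcases eq_or_ne m 0 with rfl | hm
  · have h1 : ¬ (Finsupp.single i 1 ≤ (0 : Fin 3 →₀ ℕ)) := by
      simp [Finsupp.single_le_iff]
    simp [h1]
  · rw [if_neg hm]
    by_cases hs : m = Finsupp.single i (m i)
    · have hle : Finsupp.single i 1 ≤ m := by
        rw [Finsupp.single_le_iff]
        by_contra h
        push_neg at h
        interval_cases h' : (m i)
        · apply hm
          rw [hs]; simp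
      rw [if_pos hs, if_pos hle, one_mul, coeff_geom, if_pos, sub_self]
      rw [eq_single_iff]
      intro j hj
      rw [Finsupp.tsub_apply, Finsupp.single_apply, if_neg (Ne.symm hj), Nat.sub_zero]
      exact (eq_single_iff i m).1 hs j hj
    · rw [if_neg hs, coeff_geom]
      split_ifs with hle h2
      · exfalso
        apply hs
        rw [eq_single_iff]
        intro j hj
        have := (eq_single_iff i _).1 h2 j hj
        rw [Finsupp.tsub_apply, Finsupp.single_apply, if_neg (Ne.symm hj), Nat.sub_zero] at this
        exact this
      · simp
      · simp

/-- `F` does not involve variable `i`. -/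
def VZ (i : Fin 3) (F : MvPowerSeries (Fin 3) ℂ) : Prop :=
  ∀ m : Fin 3 →₀ ℕ, m i ≠ 0 → coeff m F = 0

lemma VZ.one (i : Fin 3) : VZ i 1 := by
  intro m hm
  rw [MvPowerSeries.coeff_one, if_neg]
  rintro rfl; simp at hm

lemma VZ.X {i j : Fin 3} (h : j ≠ i) : VZ i (X j) := by
  intro m hm
  rw [MvPowerSeries.coeff_X, if_neg]
  rintro rfl; exact hm (by simp [Finsupp.single_apply, h])

lemma VZ.geom {i j : Fin 3} (h : j ≠ i) : VZ i (geom j) := by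
  intro m hm
  rw [coeff_geom, if_neg]
  intro hs
  exact hm ((eq_single_iff j m).1 hs i (Ne.symm h))

lemma VZ.mul {i : Fin 3} {A B : MvPowerSeries (Fin 3) ℂ} (hA : VZ i A) (hB : VZ i B) :
    VZ i (A * B) := by
  intro m hm
  rw [coeff_mul]
  apply Finset.sum_eq_zero
  intro p hp
  have hsum := DFunLike.congr_fun (Finset.HasAntidiagonal.mem_antidiagonal.mp hp) i
  rw [Finsupp.add_apply] at hsum
  rcases eq_or_ne (p.1 i) 0 with h1 | h1
  · rw [hB p.2 (by omega), mul_zero]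
  · rw [hA p.1 h1, zero_mul]

lemma VZ.add {i : Fin 3} {A B : MvPowerSeries (Fin 3) ℂ} (hA : VZ i A) (hB : VZ i B) :
    VZ i (A + B) := by
  intro m hm; rw [map_add, hA m hm, hB m hm, add_zero]

lemma VZ.neg {i : Fin 3} {A : MvPowerSeries (Fin 3) ℂ} (hA : VZ i A) : VZ i (-A) := by
  intro m hm; rw [map_neg, hA m hm, neg_zero]

lemma VZ.sub {i : Fin 3} {A B : MvPowerSeries (Fin 3) ℂ} (hA : VZ i A) (hB : VZ i B) :
    VZ i (A - B) := by
  intro m hm; rw [map_sub, hA m hm, hB m hm, sub_zero]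

lemma VZ.pow {i : Fin 3} {A : MvPowerSeries (Fin 3) ℂ} (hA : VZ i A) (p : ℕ) :
    VZ i (A ^ p) := by
  induction p with
  | zero => simpa using VZ.one i
  | succ p ih => rw [pow_succ]; exact ih.mul hA

/-- Absorption: multiplying by a series in the variable `1` only does not change
coefficients at monomials with zero exponent of variable `1`, up to the constant term. -/
lemma coeff_mul_vz1 (P Q : MvPowerSeries (Fin 3) ℂ) (h0 : VZ 0 Q) (h2 : VZ 2 Q)
    (m : Fin 3 →₀ ℕ) (hm : m 1 = 0) :
    coeff m (P * Q) = coeff m P * constantCoeff Q := by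
  rw [coeff_mul, ← coeff_zero_eq_constantCoeff_apply]
  apply Finset.sum_eq_single_of_mem (m, 0) (by simp)
  rintro p hp hne
  by_contra hc
  have hq : coeff p.2 Q ≠ 0 := right_ne_zero_of_mul hc
  have h20 : p.2 0 = 0 := by by_contra h; exact hq (h0 _ h)
  have h22 : p.2 2 = 0 := by by_contra h; exact hq (h2 _ h)
  have hsum := Finset.HasAntidiagonal.mem_antidiagonal.mp hp
  have h21 : p.2 1 = 0 := by
    have := DFunLike.congr_fun hsum 1
    rw [Finsupp.add_apply] at this
    omega
  have hz : p.2 = 0 := by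
    ext j; fin_cases j <;> assumption
  have hp1 : p.1 = m := by rwa [hz, add_zero] at hsum
  exact hne (Prod.ext hp1 hz)

/-- Splitting: the coefficient of a product at `w₁^n w₃^b` when the first factor does not
involve `w₃` and the second does not involve `w₁`. -/
lemma coeff_split (A B : MvPowerSeries (Fin 3) ℂ) (hA : VZ 2 A) (hB : VZ 0 B) (n b : ℕ) :
    coeff (Finsupp.single 0 n + Finsupp.single 2 b) (A * B)
      = coeff (Finsupp.single 0 n) A * coeff (Finsupp.single 2 b) B := by
  rw [coeff_mul]
  apply Finset.sum_eq_single_of_mem (Finsupp.single 0 n, Finsupp.single 2 b) (by simp)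
  rintro p hp hne
  by_contra hc
  have ha : coeff p.1 A ≠ 0 := left_ne_zero_of_mul hc
  have hb : coeff p.2 B ≠ 0 := right_ne_zero_of_mul hc
  have e12 : p.1 2 = 0 := by by_contra h; exact ha (hA _ h)
  have e20 : p.2 0 = 0 := by by_contra h; exact hb (hB _ h)
  have hsum := Finset.HasAntidiagonal.mem_antidiagonal.mp hp
  have h0 : p.1 0 + p.2 0 = n := by simpa using DFunLike.congr_fun hsum 0
  have h1 : p.1 1 + p.2 1 = 0 := by simpa using DFunLike.congr_fun hsum 1
  have h2 : p.1 2 + p.2 2 = b := by simpa using DFunLike.congr_fun hsum 2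
  apply hne
  have hp1 : p.1 = Finsupp.single 0 n := by
    ext j; fin_cases j <;> simp [Finsupp.single_apply] <;> omega
  have hp2 : p.2 = Finsupp.single 2 b := by
    ext j; fin_cases j <;> simp [Finsupp.single_apply] <;> omega
  exact Prod.ext hp1 hp2

lemma finsupp_sum_add (k l : Fin 3 →₀ ℕ) :
    (k + l).sum (fun _ e => e) = k.sum (fun _ e => e) + l.sum (fun _ e => e) :=
  Finsupp.sum_add_index' (fun _ => rfl) (fun _ _ _ => rfl)

lemma finsupp_sum_eq_zero {m : Fin 3 →₀ ℕ} (h : m.sum (fun _ e => e) = 0) : m = 0 := by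
  ext j
  rcases eq_or_ne (m j) 0 with h0 | h0
  · simpa using h0
  · exfalso
    have hj : j ∈ m.support := Finsupp.mem_support_iff.mpr h0
    have hle := Finset.single_le_sum (f := fun j => m j) (fun i _ => Nat.zero_le _) hj
    rw [Finsupp.sum] at h
    omega

lemma coeff_pow_eq_zero {f : MvPowerSeries (Fin 3) ℂ}
    (hf : constantCoeff f = 0) :
    ∀ (p : ℕ) (m : Fin 3 →₀ ℕ), m.sum (fun _ e => e) < p → coeff m (f ^ p) = 0 := by
  intro p
  induction p with
  | zero => intro m h; exact absurd h (Nat.not_lt_zero _)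
  | succ p ih =>
    intro m h
    rw [pow_succ, coeff_mul]
    apply Finset.sum_eq_zero
    rintro q hq
    have hsum := Finset.HasAntidiagonal.mem_antidiagonal.mp hq
    rcases eq_or_ne q.2 0 with h2 | h2
    · rw [h2, coeff_zero_eq_constantCoeff_apply, hf, mul_zero]
    · have hs : q.1.sum (fun _ e => e) + q.2.sum (fun _ e => e) = m.sum (fun _ e => e) := by
        rw [← finsupp_sum_add, hsum]
      have h2s : q.2.sum (fun _ e => e) ≠ 0 := fun h0 => h2 (finsupp_sum_eq_zero h0)
      rw [ih q.1 (by omega), zero_mul]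

lemma geom_inv (i : Fin 3) : (1 - X i : MvPowerSeries (Fin 3) ℂ)⁻¹ = geom i := by
  rw [MvPowerSeries.inv_eq_iff_mul_eq_one (by simp)]
  rw [mul_comm]
  exact one_sub_X_mul_geom i

lemma subx_eq : subx = (X 0 - X 1) * geom 1 := by
  unfold subx
  rw [geom_inv]

lemma suby_eq : suby = X 2 * (1 - X 1) * geom 2 := by
  unfold suby
  rw [geom_inv]

lemma inv_fact : ((1 - X 1) * (1 - X 2) : MvPowerSeries (Fin 3) ℂ)⁻¹ = geom 1 * geom 2 := by
  rw [MvPowerSeries.inv_eq_iff_mul_eq_one (by simp)]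
  have : geom 1 * geom 2 * ((1 - X 1) * (1 - X 2))
      = ((1 - X 1) * geom 1) * ((1 - X 2) * geom 2) := by ring
  rw [this, one_sub_X_mul_geom, one_sub_X_mul_geom, one_mul]

lemma const_subx : constantCoeff subx = 0 := by
  rw [subx_eq]
  simp [map_mul, map_sub]

lemma const_suby : constantCoeff suby = 0 := by
  rw [suby_eq]
  simp [map_mul]

lemma vz2_subx : VZ 2 subx := by
  rw [subx_eq]
  exact ((VZ.X (by decide)).sub (VZ.X (by decide))).mul (VZ.geom (by decide))

lemma vz0_suby : VZ 0 suby := by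
  rw [suby_eq]
  exact ((VZ.X (by decide)).mul ((VZ.one 0).sub (VZ.X (by decide)))).mul (VZ.geom (by decide))

lemma const_geom (i : Fin 3) : constantCoeff (geom i) = 1 := by
  rw [← coeff_zero_eq_constantCoeff_apply, coeff_geom, if_pos]
  simp

lemma single_sub_single (i : Fin 3) (a c : ℕ) :
    (Finsupp.single i a - Finsupp.single i c : Fin 3 →₀ ℕ) = Finsupp.single i (a - c) := by
  ext j
  rcases eq_or_ne j i with rfl | hj
  · simp
  · simp [Finsupp.single_apply, Ne.symm hj]

lemma coeff_sub_pow (n p : ℕ) :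
    coeff (Finsupp.single 0 n) ((X 0 - X 1 : MvPowerSeries (Fin 3) ℂ) ^ p)
      = if p = n then 1 else 0 := by
  induction p generalizing n with
  | zero =>
    rw [pow_zero, MvPowerSeries.coeff_one]
    by_cases h : n = 0
    · subst h; simp
    · rw [if_neg (by simp [Finsupp.single_eq_zero, h]), if_neg (by omega)]
  | succ p ih =>
    rw [pow_succ, mul_sub, map_sub]
    have hX0 : (X 0 : MvPowerSeries (Fin 3) ℂ) = monomial (Finsupp.single 0 1) 1 := rfl
    have hX1 : (X 1 : MvPowerSeries (Fin 3) ℂ) = monomial (Finsupp.single 1 1) 1 := rfl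
    rw [hX0, hX1, coeff_mul_monomial, coeff_mul_monomial]
    have h1 : ¬ ((Finsupp.single 1 1 : Fin 3 →₀ ℕ) ≤ Finsupp.single 0 n) := by
      rw [Finsupp.single_le_iff]
      simp [Finsupp.single_apply]
    rw [if_neg h1]
    by_cases hn : 1 ≤ n
    · have h0 : ((Finsupp.single 0 1 : Fin 3 →₀ ℕ) ≤ Finsupp.single 0 n) := by
        rw [Finsupp.single_le_iff]; simp [hn]
      rw [if_pos h0, single_sub_single, ← hX0, ← hX1, ih (n - 1), mul_one, sub_zero]
      have : (p = n - 1) ↔ (p + 1 = n) := by omega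
      simp [this]
    · have hn0 : n = 0 := by omega
      subst hn0
      have h0 : ¬ ((Finsupp.single 0 1 : Fin 3 →₀ ℕ) ≤ Finsupp.single 0 0) := by
        rw [Finsupp.single_le_iff]; simp
      rw [if_neg h0, sub_zero]
      norm_num

lemma coeff_geom_pow (i : Fin 3) (r c : ℕ) :
    coeff (Finsupp.single i c) (geom i ^ (r + 1)) = ((c + r).choose c : ℂ) := by
  induction r generalizing c with
  | zero => rw [pow_one, coeff_geom_single]; simp
  | succ r ih =>
    rw [pow_succ', coeff_mul, Finsupp.antidiagonal_single, Finset.sum_map]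
    simp only [Function.Embedding.coe_prodMap, Function.Embedding.coeFn_mk, Prod.map_fst, Prod.map_snd]
    have : ∀ p ∈ Finset.HasAntidiagonal.antidiagonal c,
        coeff (Finsupp.single i p.1) (geom i) * coeff (Finsupp.single i p.2) (geom i ^ (r+1))
          = ((p.2 + r).choose r : ℂ) := by
      intro p _
      rw [coeff_geom_single, ih, one_mul, Nat.choose_symm_add]
    rw [Finset.sum_congr rfl this, Finset.Nat.sum_antidiagonal_eq_sum_range_succ_mk]
    simp only []
    have hrefl := Finset.sum_range_reflect (fun k => (((k + r).choose r : ℕ) : ℂ)) (c + 1)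
    simp only [Nat.add_sub_cancel] at hrefl
    rw [hrefl]
    rw [← Nat.cast_sum]
    rw [Nat.sum_range_add_choose c r]
    norm_cast
    rw [show c + r + 1 = c + (r + 1) by omega]
    exact Nat.choose_symm_add.symm

lemma const_geom_pow (i : Fin 3) (r : ℕ) :
    constantCoeff (geom i ^ r) = 1 := by
  rw [map_pow, const_geom, one_pow]

lemma coeffA (n p : ℕ) :
    coeff (Finsupp.single 0 n) (geom 1 * subx ^ p) = if p = n then 1 else 0 := by
  rw [subx_eq, mul_pow]
  have hre : geom 1 * ((X 0 - X 1) ^ p * geom 1 ^ p)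
      = (X 0 - X 1) ^ p * geom 1 ^ (p + 1) := by ring
  rw [hre, coeff_mul_vz1 _ _ ((VZ.geom (by decide)).pow _) ((VZ.geom (by decide)).pow _) _
    (by simp [Finsupp.single_apply]), const_geom_pow, mul_one, coeff_sub_pow]

lemma coeffB (b q : ℕ) :
    coeff (Finsupp.single 2 b) (geom 2 * suby ^ q)
      = if q ≤ b then (b.choose q : ℂ) else 0 := by
  rw [suby_eq, mul_pow, mul_pow]
  have hre : geom 2 * (X 2 ^ q * (1 - X 1) ^ q * geom 2 ^ q)
      = (X 2 ^ q * geom 2 ^ (q + 1)) * (1 - X 1) ^ q := by ring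
  rw [hre, coeff_mul_vz1 _ _ (((VZ.one 0).sub (VZ.X (by decide))).pow _)
    (((VZ.one 2).sub (VZ.X (by decide))).pow _) _ (by simp [Finsupp.single_apply])]
  have hc1 : constantCoeff ((1 - X 1 : MvPowerSeries (Fin 3) ℂ) ^ q) = 1 := by simp
  rw [hc1, mul_one, X_pow_eq, coeff_monomial_mul]
  by_cases hqb : q ≤ b
  · have hle : (Finsupp.single 2 q : Fin 3 →₀ ℕ) ≤ Finsupp.single 2 b := by
      rw [Finsupp.single_le_iff]; simp [hqb]
    rw [if_pos hle, if_pos hqb, single_sub_single, one_mul, coeff_geom_pow]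
    rw [show b - q + q = b by omega]
    rw [Nat.choose_symm hqb]
  · have hle : ¬ ((Finsupp.single 2 q : Fin 3 →₀ ℕ) ≤ Finsupp.single 2 b) := by
      rw [Finsupp.single_le_iff]; simpa using hqb
    rw [if_neg hle, if_neg hqb]

lemma coeff_fg_zero (l : Fin 3 →₀ ℕ) (p q : ℕ)
    (h : l.sum (fun _ e => e) < p ∨ l.sum (fun _ e => e) < q) :
    coeff l (subx ^ p * suby ^ q) = 0 := by
  rw [coeff_mul]
  apply Finset.sum_eq_zero
  intro k hk
  have hsum := Finset.HasAntidiagonal.mem_antidiagonal.mp hk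
  have hs : k.1.sum (fun _ e => e) + k.2.sum (fun _ e => e) = l.sum (fun _ e => e) := by
    rw [← finsupp_sum_add, hsum]
  rcases h with h | h
  · rw [coeff_pow_eq_zero const_subx p k.1 (by omega), zero_mul]
  · rw [coeff_pow_eq_zero const_suby q k.2 (by omega), mul_zero]

lemma comp2_coeff_ext (H : MvPowerSeries (Fin 2) ℂ) (l : Fin 3 →₀ ℕ) (N : ℕ)
    (hl : l.sum (fun _ e => e) ≤ N) :
    coeff l (comp2 H subx suby)
      = ∑ pq ∈ Finset.range (N + 1) ×ˢ Finset.range (N + 1),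
          coeff (Finsupp.single 0 pq.1 + Finsupp.single 1 pq.2) H *
            coeff l (subx ^ pq.1 * suby ^ pq.2) := by
  rw [coeff_apply]
  show (∑ pq ∈ Finset.range (l.sum (fun _ e => e) + 1) ×ˢ
        Finset.range (l.sum (fun _ e => e) + 1), _) = _
  apply Finset.sum_subset
  · exact Finset.product_subset_product
      (Finset.range_subset_range.2 (by omega)) (Finset.range_subset_range.2 (by omega))
  · intro pq _ hpq
    simp only [Finset.mem_product, Finset.mem_range, not_and_or, not_lt] at hpq
    rw [coeff_fg_zero l pq.1 pq.2 (by omega), mul_zero]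

lemma Rmat_eq (H : MvPowerSeries (Fin 2) ℂ) (n b : ℕ) :
    Rmat H n n b = ∑ q ∈ Finset.range (b + 1), (b.choose q : ℂ) * hcoeff H n q := by
  have hmono : (Finsupp.single 0 n + Finsupp.single 1 (n - n) + Finsupp.single 2 b :
      Fin 3 →₀ ℕ) = Finsupp.single 0 n + Finsupp.single 2 b := by
    rw [Nat.sub_self, Finsupp.single_zero, add_zero]
  unfold Rmat FofH
  rw [hmono, inv_fact]
  set m : Fin 3 →₀ ℕ := Finsupp.single 0 n + Finsupp.single 2 b with hm
  have hms : m.sum (fun _ e => e) = n + b := by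
    rw [hm, finsupp_sum_add, Finsupp.sum_single_index rfl, Finsupp.sum_single_index rfl]
  rw [coeff_mul]
  have step1 : ∀ p ∈ Finset.HasAntidiagonal.antidiagonal m,
      coeff p.1 (geom 1 * geom 2) * coeff p.2 (comp2 H subx suby)
        = ∑ pq ∈ Finset.range (n + b + 1) ×ˢ Finset.range (n + b + 1),
            coeff (Finsupp.single 0 pq.1 + Finsupp.single 1 pq.2) H *
              (coeff p.1 (geom 1 * geom 2) * coeff p.2 (subx ^ pq.1 * suby ^ pq.2)) := by
    intro p hp
    have hsum := Finset.HasAntidiagonal.mem_antidiagonal.mp hp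
    have hle : p.2.sum (fun _ e => e) ≤ n + b := by
      have h2 := finsupp_sum_add p.1 p.2
      rw [hsum, hms] at h2
      omega
    rw [comp2_coeff_ext H p.2 (n + b) hle, Finset.mul_sum]
    exact Finset.sum_congr rfl fun pq _ => by ring
  rw [Finset.sum_congr rfl step1, Finset.sum_comm]
  have step2 : ∀ pq ∈ Finset.range (n + b + 1) ×ˢ Finset.range (n + b + 1),
      (∑ p ∈ Finset.HasAntidiagonal.antidiagonal m,
        coeff (Finsupp.single 0 pq.1 + Finsupp.single 1 pq.2) H *
          (coeff p.1 (geom 1 * geom 2) * coeff p.2 (subx ^ pq.1 * suby ^ pq.2)))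
        = if pq.1 = n then (if pq.2 ≤ b then hcoeff H n pq.2 * (b.choose pq.2 : ℂ) else 0)
          else 0 := by
    intro pq _
    rw [← Finset.mul_sum, ← coeff_mul]
    have hre : geom 1 * geom 2 * (subx ^ pq.1 * suby ^ pq.2)
        = (geom 1 * subx ^ pq.1) * (geom 2 * suby ^ pq.2) := by ring
    rw [hre, hm, coeff_split _ _ ((VZ.geom (by decide)).mul (vz2_subx.pow _))
      ((VZ.geom (by decide)).mul (vz0_suby.pow _)), coeffA, coeffB]
    unfold hcoeff
    split_ifs with h1 h2 <;> first | (rw [h1]; ring) | ring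
  rw [Finset.sum_congr rfl step2, Finset.sum_product]
  have step3 : ∀ p ∈ Finset.range (n + b + 1),
      (∑ q ∈ Finset.range (n + b + 1),
        if p = n then (if q ≤ b then hcoeff H n q * (b.choose q : ℂ) else 0) else 0)
        = if p = n then
            (∑ q ∈ Finset.range (n + b + 1),
              if q ≤ b then hcoeff H n q * (b.choose q : ℂ) else 0) else 0 := by
    intro p _
    split_ifs <;> simp
  rw [Finset.sum_congr rfl step3, Finset.sum_ite_eq' (Finset.range (n + b + 1)) n,
    if_pos (Finset.mem_range.mpr (by omega))]
  rw [← Finset.sum_subset (Finset.range_subset_range.2 (show b + 1 ≤ n + b + 1 by omega))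
    (fun q _ hq => by rw [if_neg (by simp at hq ⊢; omega)])]
  apply Finset.sum_congr rfl
  intro q hq
  rw [if_pos (by simp at hq; omega), mul_comm]

lemma tri {M : Type*} [AddCommMonoid M] (n : ℕ) (f : ℕ → ℕ → M) :
    ∑ b ∈ Finset.range (n + 1), ∑ q ∈ Finset.range (b + 1), f b q
      = ∑ q ∈ Finset.range (n + 1), ∑ k ∈ Finset.range (n - q + 1), f (q + k) q := by
  have h1 : ∀ b ∈ Finset.range (n + 1),
      (∑ q ∈ Finset.range (b + 1), f b q)
        = ∑ q ∈ Finset.range (n + 1), if q ≤ b then f b q else 0 := by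
    intro b hb
    simp only [Finset.mem_range] at hb
    rw [← Finset.sum_subset (Finset.range_subset_range.2 (show b + 1 ≤ n + 1 by omega))
      (fun q _ hq => by rw [if_neg (by simp at hq ⊢; omega)])]
    apply Finset.sum_congr rfl
    intro q hq
    rw [if_pos (by simp at hq; omega)]
  rw [Finset.sum_congr rfl h1, Finset.sum_comm]
  apply Finset.sum_congr rfl
  intro q hq
  simp only [Finset.mem_range] at hq
  rw [← Finset.sum_filter]
  have hfil : (Finset.range (n + 1)).filter (fun b => q ≤ b) = Finset.Ico q (n + 1) := by
    ext x
    simp [Finset.mem_filter, Finset.mem_range, Finset.mem_Ico]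
    omega
  rw [hfil, Finset.sum_Ico_eq_sum_range]
  rw [show n + 1 - q = n - q + 1 by omega]

/-- `Φ_F[uⁿ] = ∑_{b=0}^n C(n,b) R_n(n,b) u^b v^{n-b}` equals
`∑_{j=0}^n C(n,j) h_{nj} u^j (u+v)^{n-j}`, where `F` arises from `H`. -/
theorem Phi_F_apply_u_pow (H : MvPowerSeries (Fin 2) ℂ) (n : ℕ) :
    ∑ b ∈ Finset.range (n + 1),
        MvPolynomial.C ((n.choose b : ℂ) * Rmat H n n b) *
          MvPolynomial.X (0 : Fin 2) ^ b * MvPolynomial.X (1 : Fin 2) ^ (n - b) =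
      ∑ j ∈ Finset.range (n + 1),
        MvPolynomial.C ((n.choose j : ℂ) * hcoeff H n j) *
          MvPolynomial.X (0 : Fin 2) ^ j *
            (MvPolynomial.X (0 : Fin 2) + MvPolynomial.X (1 : Fin 2)) ^ (n - j) := by
  have step1 : ∀ b ∈ Finset.range (n + 1),
      MvPolynomial.C ((n.choose b : ℂ) * Rmat H n n b) *
          MvPolynomial.X (0 : Fin 2) ^ b * MvPolynomial.X (1 : Fin 2) ^ (n - b)
        = ∑ q ∈ Finset.range (b + 1),
            MvPolynomial.C ((n.choose b : ℂ) * ((b.choose q : ℂ) * hcoeff H n q)) *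
              MvPolynomial.X (0 : Fin 2) ^ b * MvPolynomial.X (1 : Fin 2) ^ (n - b) := by
    intro b _
    rw [Rmat_eq, Finset.mul_sum, map_sum, Finset.sum_mul, Finset.sum_mul]
  rw [Finset.sum_congr rfl step1]
  rw [tri n (fun b q => MvPolynomial.C ((n.choose b : ℂ) * ((b.choose q : ℂ) * hcoeff H n q)) *
      MvPolynomial.X (0 : Fin 2) ^ b * MvPolynomial.X (1 : Fin 2) ^ (n - b))]
  apply Finset.sum_congr rfl
  intro q hq
  simp only [Finset.mem_range] at hq
  rw [add_pow, Finset.mul_sum]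
  apply Finset.sum_congr rfl
  intro k hk
  simp only [Finset.mem_range] at hk
  have hcc : n.choose (q + k) * (q + k).choose q = n.choose q * (n - q).choose k := by
    have h := Nat.choose_mul (n := n) (show q ≤ q + k by omega)
    simpa using h
  have hccC : ((n.choose (q + k) : ℂ)) * (((q + k).choose q : ℂ))
      = ((n.choose q : ℂ)) * (((n - q).choose k : ℂ)) := by exact_mod_cast hcc
  have hcast : (((n - q).choose k : ℕ) : MvPolynomial (Fin 2) ℂ)
      = MvPolynomial.C (((n - q).choose k : ℕ) : ℂ) := (map_natCast MvPolynomial.C _).symm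
  rw [hcast, pow_add, Nat.sub_sub]
  have hA : ((n.choose (q + k) : ℂ) * (((q + k).choose q : ℂ) * hcoeff H n q))
      = ((n.choose q : ℂ) * hcoeff H n q) * (((n - q).choose k : ℕ) : ℂ) := by
    linear_combination (hcoeff H n q) * hccC
  rw [hA, MvPolynomial.C_mul]
  ring
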